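/- For every integer n ≥ 0, the RNA sequence Ŝ(n) given by the natural labelling of the saturated full binary tree of height n is a design under the Watson–Crick model, and its unique maximum-size arc set equals the secondary structure R̂(n) corresponding to that tree. -/

import Mathlib

inductive Base : Type
  | A | U | G | C
  deriving DecidableEq

open Base

/-- A (pseudoknot-free) secondary structure on positions `{1,…,m}`:
arcs `(i,j)` with `1 ≤ i < j ≤ m`, no two arcs sharing an endpoint, no crossings. -/
def IsSecStruct (m : ℕ) (R : Finset (ℕ × ℕ)) : Prop :=
  (∀ a ∈ R, 1 ≤ a.1 ∧ a.1 < a.2 ∧ a.2 ≤ m) ∧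
  (∀ a ∈ R, ∀ b ∈ R, a ≠ b → a.1 ≠ b.1 ∧ a.1 ≠ b.2 ∧ a.2 ≠ b.1 ∧ a.2 ≠ b.2) ∧
  (∀ a ∈ R, ∀ b ∈ R, ¬(a.1 < b.1 ∧ b.1 < a.2 ∧ a.2 < b.2))

/-- Watson–Crick pairing: `{x,y} = {G,C}` or `{x,y} = {A,U}`. -/
def WCMatch (x y : Base) : Prop :=
  (x = G ∧ y = C) ∨ (x = C ∧ y = G) ∨ (x = A ∧ y = U) ∨ (x = U ∧ y = A)

/-- An arc set for the sequence `S` under the Watson–Crick model. -/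
def IsArcSet (m : ℕ) (S : ℕ → Base) (R : Finset (ℕ × ℕ)) : Prop :=
  IsSecStruct m R ∧ ∀ a ∈ R, WCMatch (S a.1) (S a.2)

/-- A maximum-size arc set for `S` under the Watson–Crick model. -/
def IsMaxArcSet (m : ℕ) (S : ℕ → Base) (R : Finset (ℕ × ℕ)) : Prop :=
  IsArcSet m S R ∧ ∀ R' : Finset (ℕ × ℕ), IsArcSet m S R' → R'.card ≤ R.card

/-- `S` is a design: it admits a unique maximum-size arc set. -/
def IsDesign (m : ℕ) (S : ℕ → Base) : Prop :=
  ∃! R : Finset (ℕ × ℕ), IsMaxArcSet m S R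

/-- `R` is designable: some design `S` has `R` as its unique maximum-size arc set. -/
def Designable (m : ℕ) (R : Finset (ℕ × ℕ)) : Prop :=
  ∃ S : ℕ → Base, IsMaxArcSet m S R ∧ ∀ R' : Finset (ℕ × ℕ), IsMaxArcSet m S R' → R' = R
/-- First letter of the two-letter label of the `i`-th (0-based, left to right)
two-dot vertex at height `h`: even heights alternate `AU`/`UA`, odd heights `GC`/`CG`. -/
def pairFst (h i : ℕ) : Base :=
  if h % 2 = 0 then (if i % 2 = 0 then A else U) else (if i % 2 = 0 then G else C)

/-- Second letter of that two-letter label. -/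
def pairSnd (h i : ℕ) : Base :=
  if h % 2 = 0 then (if i % 2 = 0 then U else A) else (if i % 2 = 0 then C else G)

/-- Label of the height-`(n+1)` one-dot leaves: `A` if `n+1` is even, `C` if odd. -/
def leafBase (n : ℕ) : Base := if (n + 1) % 2 = 0 then A else C

/-- Nucleotide word of the natural labelling of the subtree of `T(n,c)` rooted at the
height-`h = n - d` vertex of left-to-right index `i`, read in traversal order. -/
def natSeqAux (c : ℕ → ℕ) (n : ℕ) : ℕ → ℕ → ℕ → List Base
  | 0, h, i => pairFst h i :: (List.replicate (c i) (leafBase n) ++ [pairSnd h i])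
  | d+1, h, i =>
      pairFst h i ::
        (natSeqAux c n d (h+1) (2*i) ++ natSeqAux c n d (h+1) (2*i+1) ++ [pairSnd h i])

/-- The word of `S(n,c)`. -/
def natSeqList (n : ℕ) (c : ℕ → ℕ) : List Base := natSeqAux c n n 0 0

/-- Length of `S(n,c)`. -/
def natLen (n : ℕ) (c : ℕ → ℕ) : ℕ := (natSeqList n c).length

/-- `S(n,c)` as a sequence on positions `1,…,natLen n c`. -/
def natSeq (n : ℕ) (c : ℕ → ℕ) (p : ℕ) : Base := (natSeqList n c).getD (p - 1) A

/-- Number of dots in the subtree rooted at the height-`(n-d)` vertex of index `i`. -/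
def natSizeAux (c : ℕ → ℕ) : ℕ → ℕ → ℕ
  | 0, i => c i + 2
  | d+1, i => 2 + natSizeAux c d (2*i) + natSizeAux c d (2*i+1)

/-- Arcs of the secondary structure of `T(n,c)` for the subtree rooted at the
height-`(n-d)` vertex of index `i`, whose first dot is at position `off`. -/
def natArcsAux (c : ℕ → ℕ) : ℕ → ℕ → ℕ → List (ℕ × ℕ)
  | 0, i, off => [(off, off + c i + 1)]
  | d+1, i, off =>
      (off, off + natSizeAux c (d+1) i - 1) ::
        (natArcsAux c d (2*i) (off + 1) ++
          natArcsAux c d (2*i+1) (off + 1 + natSizeAux c d (2*i)))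

/-- The secondary structure `R(n,c)` corresponding to `T(n,c)` (positions `1,…,m`). -/
def natStruct (n : ℕ) (c : ℕ → ℕ) : Finset (ℕ × ℕ) := (natArcsAux c n 0 1).toFinset

/-- Heights (in `T(n,c)`) of the tree vertices read at successive positions. -/
def heightSeqAux (c : ℕ → ℕ) : ℕ → ℕ → ℕ → List ℕ
  | 0, h, i => h :: (List.replicate (c i) (h+1) ++ [h])
  | d+1, h, i =>
      h :: (heightSeqAux c d (h+1) (2*i) ++ heightSeqAux c d (h+1) (2*i+1) ++ [h])

/-- The height of position `p` of `S(n,c)`. -/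
def natHeight (n : ℕ) (c : ℕ → ℕ) (p : ℕ) : ℕ := (heightSeqAux c n 0 0).getD (p - 1) 0
/-- Word of the natural labelling of the saturated full binary tree, for the subtree
rooted at the height-`h` vertex of left-to-right index `i` (`d` = remaining depth). -/
def fbSeqAux : ℕ → ℕ → ℕ → List Base
  | 0, h, i => [pairFst h i, pairSnd h i]
  | d+1, h, i =>
      pairFst h i ::
        (fbSeqAux d (h+1) (2*i) ++ fbSeqAux d (h+1) (2*i+1) ++ [pairSnd h i])

/-- The word of `Ŝ(n)`. -/
def fbSeqList (n : ℕ) : List Base := fbSeqAux n 0 0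

/-- Length of `Ŝ(n)`. -/
def fbLen (n : ℕ) : ℕ := (fbSeqList n).length

/-- `Ŝ(n)` as a sequence on positions `1,…,fbLen n`. -/
def fbSeq (n : ℕ) (p : ℕ) : Base := (fbSeqList n).getD (p - 1) A

/-- Number of dots in a full binary subtree of remaining depth `d`. -/
def fbSize : ℕ → ℕ
  | 0 => 2
  | d+1 => 2 + 2 * fbSize d

/-- Arcs of the secondary structure of the saturated full binary tree. -/
def fbArcsAux : ℕ → ℕ → List (ℕ × ℕ)
  | 0, off => [(off, off + 1)]
  | d+1, off =>
      (off, off + fbSize (d+1) - 1) ::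
        (fbArcsAux d (off + 1) ++ fbArcsAux d (off + 1 + fbSize d))

/-- The secondary structure `R̂(n)`. -/
def fbStruct (n : ℕ) : Finset (ℕ × ℕ) := (fbArcsAux n 1).toFinset

namespace FBD
open Base

/-! ### Base-level lemmas -/

def compB : Base → Base
  | A => U | U => A | G => C | C => G

lemma wc_iff (x y : Base) : WCMatch x y ↔ y = compB x := by
  cases x <;> cases y <;> simp [WCMatch, compB]

def isAU : Base → Bool
  | A => true | U => true | G => false | C => false

lemma wc_isAU {x y : Base} (h : WCMatch x y) : isAU x = isAU y := by
  cases x <;> cases y <;> simp_all [WCMatch, isAU]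

lemma compB_ne (x : Base) : compB x ≠ x := by cases x <;> simp [compB]

lemma isAU_pairFst (h i : ℕ) : isAU (pairFst h i) = decide (h % 2 = 0) := by
  unfold pairFst; split <;> split <;> simp_all [isAU]

lemma isAU_pairSnd (h i : ℕ) : isAU (pairSnd h i) = decide (h % 2 = 0) := by
  unfold pairSnd; split <;> split <;> simp_all [isAU]

lemma pairSnd_eq_compB (h i : ℕ) : pairSnd h i = compB (pairFst h i) := by
  unfold pairFst pairSnd; split <;> split <;> simp [compB]

lemma pairFst_succ (h i : ℕ) : pairFst h (i+1) = compB (pairFst h i) := by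
  rcases Nat.even_or_odd i with hi | hi
  · have h1 : i % 2 = 0 := Nat.even_iff.mp hi
    have h2 : (i+1) % 2 = 1 := by omega
    unfold pairFst; split <;> simp [h1, h2, compB]
  · have h1 : i % 2 = 1 := Nat.odd_iff.mp hi
    have h2 : (i+1) % 2 = 0 := by omega
    unfold pairFst; split <;> simp [h1, h2, compB]

lemma wc_pairFst_pairSnd (h i : ℕ) : WCMatch (pairFst h i) (pairSnd h i) := by
  rw [wc_iff, pairSnd_eq_compB]

/-- Height parity mismatch kills WCMatch. -/
lemma wc_parity_ne {x y : Base} (hw : WCMatch x y) (hx : isAU x ≠ isAU y) : False :=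
  hx (wc_isAU hw)

/-! ### Tokens -/

def tokAux : ℕ → ℕ → ℕ → List (Bool × ℕ × ℕ)
  | 0, h, i => [(true, h, i), (false, h, i)]
  | d+1, h, i =>
      (true, h, i) ::
        (tokAux d (h+1) (2*i) ++ tokAux d (h+1) (2*i+1) ++ [(false, h, i)])

def tokBase : Bool × ℕ × ℕ → Base
  | (b, h, i) => if b then pairFst h i else pairSnd h i

lemma seq_eq_tok_map (d h i : ℕ) : fbSeqAux d h i = (tokAux d h i).map tokBase := by
  induction d generalizing h i with
  | zero => simp [fbSeqAux, tokAux, tokBase]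
  | succ d ih => simp [fbSeqAux, tokAux, tokBase, ih]

lemma fbSize_ge_two (d : ℕ) : 2 ≤ fbSize d := by
  induction d with
  | zero => simp [fbSize]
  | succ d ih => simp only [fbSize]; omega

lemma tok_length (d : ℕ) : ∀ h i, (tokAux d h i).length = fbSize d := by
  induction d with
  | zero => intro h i; simp [tokAux, fbSize]
  | succ d ih => intro h i; simp [tokAux, fbSize, ih]; ring

lemma seq_length (d h i : ℕ) : (fbSeqAux d h i).length = fbSize d := by
  rw [seq_eq_tok_map, List.length_map, tok_length]

lemma fbLen_eq (n : ℕ) : fbLen n = fbSize n := seq_length n 0 0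

lemma fbSize_pow (d : ℕ) : fbSize d = 2^(d+2) - 2 := by
  induction d with
  | zero => simp [fbSize]
  | succ d ih =>
      have h2 : 2 ≤ 2^(d+2) := Nat.one_lt_two_pow_iff.mpr (by omega)
      have h3 : 2^(d+1+2) = 2^(d+2) * 2 := pow_succ 2 (d+2)
      simp only [fbSize, ih]; omega

end FBD
namespace FBD
open Base

/-! ### First/second dot positions -/

/-- Position (1-based) of the first dot of vertex `(h,i)` in `Ŝ(n)`. -/
def F (n : ℕ) : ℕ → ℕ → ℕ
  | 0, _ => 1
  | h+1, i => F n h (i/2) + 1 + (i % 2) * fbSize (n - (h+1))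

/-- Position of the second dot of vertex `(h,i)`. -/
def Lp (n h i : ℕ) : ℕ := F n h i + fbSize (n - h) - 1

lemma F_zero (n i : ℕ) : F n 0 i = 1 := rfl

lemma F_succ (n h i : ℕ) :
    F n (h+1) i = F n h (i/2) + 1 + (i % 2) * fbSize (n - (h+1)) := rfl

lemma fbSize_step {d e : ℕ} (h : e < d) : fbSize (d - e) = 2 + 2 * fbSize (d - (e+1)) := by
  have h1 : d - e = (d - (e+1)) + 1 := by omega
  rw [h1]; rfl

lemma F_bound (d : ℕ) : ∀ e, e ≤ d → ∀ r, r < 2^e →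
    1 ≤ F d e r ∧ F d e r + fbSize (d - e) - 1 ≤ fbSize d := by
  intro e
  induction e with
  | zero => intro _ r _; rw [F_zero, Nat.sub_zero]; omega
  | succ e ih =>
      intro he r hr
      have hr2 : r / 2 < 2 ^ e := by rw [pow_succ] at hr; omega
      obtain ⟨h1, h2⟩ := ih (by omega) (r/2) hr2
      have hs : fbSize (d - e) = 2 + 2 * fbSize (d - (e+1)) := fbSize_step (by omega)
      rw [F_succ]
      set t := (r % 2) * fbSize (d - (e+1)) with hT
      have ht : t ≤ fbSize (d - (e+1)) := by
        have h3 : r % 2 = 0 ∨ r % 2 = 1 := by omega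
        rcases h3 with h3 | h3 <;> simp [hT, h3]
      have hgt := fbSize_ge_two (d - (e+1))
      omega

lemma F_shift (d : ℕ) {b : ℕ} (hb : b ≤ 1) :
    ∀ e, e ≤ d → ∀ r, r < 2^e →
      F (d+1) (e+1) (b*2^e + r) = 1 + b * fbSize d + F d e r := by
  intro e
  induction e with
  | zero =>
      intro _ r hr
      interval_cases r
      rw [F_succ, F_zero, F_zero]
      have hb3 : b * 2^0 + 0 = b := by omega
      rw [hb3]
      have hb2 : b % 2 = b := by omega
      rw [hb2]
      have h4 : d + 1 - (0+1) = d := by omega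
      rw [h4]; omega
  | succ e ih =>
      intro he r hr
      have hc : r % 2 ≤ 1 := by omega
      have hr2 : r / 2 < 2 ^ e := by rw [pow_succ] at hr; omega
      have hN : b*2^(e+1) + r = 2*(b*2^e + r/2) + r % 2 := by
        conv_lhs => rw [pow_succ, show r = 2*(r/2) + r % 2 by omega]
        ring
      have hdiv : (b*2^(e+1) + r) / 2 = b*2^e + r/2 := by omega
      have hmod : (b*2^(e+1) + r) % 2 = r % 2 := by omega
      rw [F_succ, hdiv, hmod, ih (by omega) (r/2) hr2, F_succ]
      have h1 : d + 1 - (e+1+1) = d - (e+1) := by omega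
      rw [h1]; ring

/-- Segment lemma. -/
lemma tok_seg (d : ℕ) : ∀ e, e ≤ d → ∀ h i r, r < 2^e →
    ∃ t, (tokAux d h i).drop (F d e r - 1) = tokAux (d-e) (h+e) (i*2^e + r) ++ t := by
  induction d with
  | zero =>
      intro e he h i r hr
      interval_cases e
      interval_cases r
      exact ⟨[], by simp [F_zero]⟩
  | succ d ih =>
      intro e he h i r hr
      match e with
      | 0 =>
          interval_cases r
          exact ⟨[], by simp [F_zero]⟩
      | e+1 =>
          have h2e : 0 < 2^e := Nat.pow_pos (by omega)
          obtain ⟨b, r0, hb1, hr0lt, hrr⟩ :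
              ∃ b r0, b ≤ 1 ∧ r0 < 2^e ∧ r = b * 2^e + r0 := by
            refine ⟨r / 2^e, r % 2^e, ?_, Nat.mod_lt _ h2e, (Nat.div_add_mod' r (2^e)).symm⟩
            rw [pow_succ] at hr
            have := Nat.div_lt_of_lt_mul hr
            omega
          obtain ⟨t, ht⟩ := ih e (by omega) (h+1) (2*i + b) r0 hr0lt
          obtain ⟨hF1, hF2⟩ := F_bound d e (by omega) r0 hr0lt
          have hgt := fbSize_ge_two (d - e)
          have hlen1 := tok_length d (h+1) (2*i)
          have hlen2 := tok_length d (h+1) (2*i+1)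
          subst hrr
          rw [F_shift d hb1 e (by omega) r0 hr0lt]
          have hstep : (tokAux (d+1) h i).drop (1 + b * fbSize d + F d e r0 - 1)
              = (tokAux d (h+1) (2*i+b)).drop (F d e r0 - 1)
                ++ (if b = 0 then tokAux d (h+1) (2*i+1) ++ [(false,h,i)] else [(false,h,i)]) := by
            show ((true,h,i) :: (tokAux d (h+1) (2*i) ++ tokAux d (h+1) (2*i+1) ++ [(false,h,i)])).drop _ = _
            rcases (by omega : b = 0 ∨ b = 1) with hb | hb
            · subst hb
              simp only [if_pos rfl]
              have h1 : 1 + 0 * fbSize d + F d e r0 - 1 = (F d e r0 - 1) + 1 := by omega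
              rw [h1, List.drop_succ_cons, List.append_assoc, List.drop_append_of_le_length]
              · simp
              · rw [hlen1]; omega
            · subst hb
              simp only [if_neg (by omega : (1:ℕ) ≠ 0)]
              have h1 : 1 + 1 * fbSize d + F d e r0 - 1
                  = ((tokAux d (h+1) (2*i)).length + (F d e r0 - 1)) + 1 := by rw [hlen1]; omega
              rw [h1, List.drop_succ_cons, List.append_assoc, List.drop_length_add_append,
                List.drop_append_of_le_length]
              rw [hlen2]; omega
          have harg : tokAux (d+1-(e+1)) (h+(e+1)) (i*2^(e+1) + (b*2^e + r0))
              = tokAux (d-e) (h+1+e) ((2*i+b)*2^e + r0) := by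
            have e1 : d+1-(e+1) = d-e := by omega
            have e2 : h+(e+1) = h+1+e := by omega
            have e3 : i*2^(e+1) + (b*2^e + r0) = (2*i+b)*2^e + r0 := by
              rw [pow_succ]; ring
            rw [e1, e2, e3]
          rw [harg]
          exact ⟨t ++ (if b = 0 then tokAux d (h+1) (2*i+1) ++ [(false,h,i)]
              else [(false,h,i)]), by rw [hstep, ht, List.append_assoc]⟩
end FBD
namespace FBD
open Base

/-! ### Classification of positions -/

def cls (n p : ℕ) : Bool × ℕ × ℕ := (tokAux n 0 0).getD (p-1) (true, 0, 0)

lemma tok_shape (d h i : ℕ) :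
    ∃ mid, tokAux d h i = (true,h,i) :: (mid ++ [(false,h,i)]) ∧ mid.length = fbSize d - 2 := by
  cases d with
  | zero => exact ⟨[], rfl, by simp [fbSize]⟩
  | succ d =>
      refine ⟨tokAux d (h+1) (2*i) ++ tokAux d (h+1) (2*i+1), ?_, ?_⟩
      · show tokAux (d+1) h i = _
        rw [tokAux, List.append_assoc]
      · rw [List.length_append, tok_length, tok_length]
        show _ = 2 + 2 * fbSize d - 2
        omega

lemma tok_getD_head (d h i : ℕ) (x : Bool × ℕ × ℕ) : (tokAux d h i).getD 0 x = (true,h,i) := by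
  obtain ⟨mid, hm, _⟩ := tok_shape d h i
  rw [hm]; rfl

lemma tok_getD_last (d h i : ℕ) (x : Bool × ℕ × ℕ) :
    (tokAux d h i).getD (fbSize d - 1) x = (false,h,i) := by
  obtain ⟨mid, hm, hl⟩ := tok_shape d h i
  have h2 := fbSize_ge_two d
  rw [hm]
  have h1 : fbSize d - 1 = (mid.length + 1) + 0 := by omega
  rw [h1, List.getD_cons_succ, List.getD_append_right _ _ _ _ (le_refl _)]
  simp

lemma getD_drop (l : List α) (k j : ℕ) (x : α) : (l.drop k).getD j x = l.getD (k + j) x := by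
  simp [List.getD_eq_getElem?_getD, List.getElem?_drop]

lemma cls_F {n h i : ℕ} (hh : h ≤ n) (hi : i < 2^h) : cls n (F n h i) = (true, h, i) := by
  obtain ⟨t, ht⟩ := tok_seg n h hh 0 0 i hi
  have hd := getD_drop (tokAux n 0 0) (F n h i - 1) 0 (true,0,0)
  rw [Nat.add_zero] at hd
  unfold cls
  rw [← hd, ht, List.getD_append _ _ _ 0 (by rw [tok_length]; have := fbSize_ge_two (n-h); omega),
    tok_getD_head]
  simp

lemma cls_L {n h i : ℕ} (hh : h ≤ n) (hi : i < 2^h) : cls n (Lp n h i) = (false, h, i) := by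
  obtain ⟨t, ht⟩ := tok_seg n h hh 0 0 i hi
  obtain ⟨hF1, hF2⟩ := F_bound n h hh i hi
  have h2 := fbSize_ge_two (n - h)
  have hd := getD_drop (tokAux n 0 0) (F n h i - 1) (fbSize (n-h) - 1) (true,0,0)
  have he : F n h i - 1 + (fbSize (n-h) - 1) = Lp n h i - 1 := by unfold Lp; omega
  rw [he] at hd
  unfold cls
  rw [← hd, ht, List.getD_append _ _ _ _ (by rw [tok_length]; omega), tok_getD_last]
  simp

end FBD
namespace FBD
open Base

/-! ### Surjectivity of the classification -/

lemma tok_getD_mem (x : Bool × ℕ × ℕ) :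
    ∀ d h i k, k < fbSize d → ∃ e r, e ≤ d ∧ r < 2^e ∧
      (((tokAux d h i).getD k x = (true, h+e, i*2^e+r) ∧ k+1 = F d e r) ∨
       ((tokAux d h i).getD k x = (false, h+e, i*2^e+r) ∧ k+2 = F d e r + fbSize (d-e))) := by
  intro d
  induction d with
  | zero =>
      intro h i k hk
      refine ⟨0, 0, le_refl _, by norm_num, ?_⟩
      have : k = 0 ∨ k = 1 := by simp [fbSize] at hk; omega
      rcases this with rfl | rfl
      · exact Or.inl ⟨by simp [tokAux, F_zero], by rw [F_zero]⟩
      · exact Or.inr ⟨by simp [tokAux, F_zero], by rw [F_zero]; rfl⟩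
  | succ d ih =>
      intro h i k hk
      have hs : fbSize (d+1) = 2 + 2 * fbSize d := rfl
      have hl1 := tok_length d (h+1) (2*i)
      have hl2 := tok_length d (h+1) (2*i+1)
      have hshape : tokAux (d+1) h i
          = (true,h,i) :: ((tokAux d (h+1) (2*i) ++ tokAux d (h+1) (2*i+1)) ++ [(false,h,i)]) := by
        show tokAux (d+1) h i = _
        rw [tokAux, List.append_assoc]
      rcases (by omega : k = 0 ∨ (1 ≤ k ∧ k ≤ fbSize d) ∨
          (fbSize d + 1 ≤ k ∧ k ≤ 2 * fbSize d) ∨ k = 2 * fbSize d + 1) with rfl | hmid | hmid | rfl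
      · refine ⟨0, 0, by omega, by norm_num, Or.inl ⟨?_, by rw [F_zero]⟩⟩
        rw [hshape]; simp
      · -- left child
        obtain ⟨e, r, he, hr, hcase⟩ := ih (h+1) (2*i) (k-1) (by omega)
        refine ⟨e+1, r, by omega, by rw [pow_succ]; omega, ?_⟩
        have hF := F_shift d (by omega : (0:ℕ) ≤ 1) e he r hr
        rw [zero_mul, zero_add] at hF
        have hget : (tokAux (d+1) h i).getD k x = (tokAux d (h+1) (2*i)).getD (k-1) x := by
          conv_lhs => rw [hshape, show k = (k-1)+1 by omega]
          rw [List.getD_cons_succ,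
            List.getD_append _ _ _ _ (by rw [List.length_append, hl1, hl2]; omega),
            List.getD_append _ _ _ _ (by rw [hl1]; omega)]
        have hco1 : h + 1 + e = h + (e+1) := by omega
        have hco2 : (2*i)*2^e + r = i*2^(e+1) + r := by rw [pow_succ]; ring
        have hco3 : d + 1 - (e+1) = d - e := by omega
        rcases hcase with ⟨hv, hp⟩ | ⟨hv, hp⟩
        · exact Or.inl ⟨by rw [hget, hv, hco1, hco2], by rw [hF]; omega⟩
        · exact Or.inr ⟨by rw [hget, hv, hco1, hco2], by rw [hF, hco3]; omega⟩
      · -- right child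
        obtain ⟨e, r, he, hr, hcase⟩ := ih (h+1) (2*i+1) (k-1-fbSize d) (by omega)
        refine ⟨e+1, 2^e + r, by omega, by rw [pow_succ]; omega, ?_⟩
        have hF := F_shift d (le_refl 1) e he r hr
        rw [one_mul] at hF
        have hget : (tokAux (d+1) h i).getD k x
            = (tokAux d (h+1) (2*i+1)).getD (k-1-fbSize d) x := by
          conv_lhs => rw [hshape, show k = (k-1)+1 by omega]
          rw [List.getD_cons_succ,
            List.getD_append _ _ _ _ (by rw [List.length_append, hl1, hl2]; omega),
            List.getD_append_right _ _ _ _ (by rw [hl1]; omega), hl1]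
        have hco1 : h + 1 + e = h + (e+1) := by omega
        have hco2 : (2*i+1)*2^e + r = i*2^(e+1) + (2^e + r) := by rw [pow_succ]; ring
        have hco3 : d + 1 - (e+1) = d - e := by omega
        rcases hcase with ⟨hv, hp⟩ | ⟨hv, hp⟩
        · exact Or.inl ⟨by rw [hget, hv, hco1, hco2], by rw [hF]; omega⟩
        · exact Or.inr ⟨by rw [hget, hv, hco1, hco2], by rw [hF, hco3]; omega⟩
      · refine ⟨0, 0, by omega, by norm_num, Or.inr ⟨?_, ?_⟩⟩
        · rw [hshape, List.getD_cons_succ,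
            List.getD_append_right _ _ _ _ (by rw [List.length_append, hl1, hl2]; omega),
            List.length_append, hl1, hl2,
            show 2*fbSize d - (fbSize d + fbSize d) = 0 by omega]
          simp
        · rw [F_zero, Nat.sub_zero, hs]; omega

/-- Every position in `[1, fbSize n]` is a first or second dot of a unique vertex. -/
lemma cls_surj {n p : ℕ} (h1 : 1 ≤ p) (h2 : p ≤ fbSize n) :
    ∃ h i, h ≤ n ∧ i < 2^h ∧
      ((cls n p = (true,h,i) ∧ p = F n h i) ∨ (cls n p = (false,h,i) ∧ p = Lp n h i)) := by
  obtain ⟨e, r, he, hr, hc⟩ := tok_getD_mem (true,0,0) n 0 0 (p-1) (by omega)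
  refine ⟨e, r, he, hr, ?_⟩
  have hge := fbSize_ge_two (n - e)
  obtain ⟨hF1, hF2⟩ := F_bound n e he r hr
  rcases hc with ⟨hv, hp⟩ | ⟨hv, hp⟩
  · exact Or.inl ⟨by unfold cls; rw [hv]; simp, by omega⟩
  · exact Or.inr ⟨by unfold cls; rw [hv]; simp, by unfold Lp; omega⟩

/-! ### Letters -/

lemma fbSeq_cls {n p : ℕ} (h1 : 1 ≤ p) (h2 : p ≤ fbSize n) :
    fbSeq n p = tokBase (cls n p) := by
  unfold fbSeq fbSeqList cls
  rw [seq_eq_tok_map]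
  have : (A : Base) = tokBase (true, 0, 0) := by simp [tokBase, pairFst]
  rw [this, List.getD_map]

lemma letter_F {n h i : ℕ} (hh : h ≤ n) (hi : i < 2^h) : fbSeq n (F n h i) = pairFst h i := by
  obtain ⟨hF1, hF2⟩ := F_bound n h hh i hi
  have hge := fbSize_ge_two (n - h)
  rw [fbSeq_cls hF1 (by omega), cls_F hh hi]
  rfl

lemma letter_L {n h i : ℕ} (hh : h ≤ n) (hi : i < 2^h) : fbSeq n (Lp n h i) = pairSnd h i := by
  obtain ⟨hF1, hF2⟩ := F_bound n h hh i hi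
  have hge := fbSize_ge_two (n - h)
  rw [fbSeq_cls (by unfold Lp; omega) (by unfold Lp; omega), cls_L hh hi]
  rfl

/-! ### Adjacency -/

lemma F_le_L (n h i : ℕ) : F n h i < Lp n h i := by
  have h2 := fbSize_ge_two (n - h)
  unfold Lp
  omega

lemma adj_sib {n h i : ℕ} (hi : i % 2 = 0) (hh : 1 ≤ h) : Lp n h i + 1 = F n h (i+1) := by
  obtain ⟨h', rfl⟩ : ∃ h', h = h' + 1 := ⟨h - 1, by omega⟩
  have h2 := fbSize_ge_two (n - (h'+1))
  rw [Lp, F_succ, F_succ]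
  have e1 : (i+1)/2 = i/2 := by omega
  have e2 : (i+1) % 2 = 1 := by omega
  rw [e1, e2, hi]
  omega

lemma adj_parent {n h i : ℕ} (hi : i % 2 = 1) (hh : h ≤ n) (hh1 : 1 ≤ h) :
    Lp n h i + 1 = Lp n (h-1) (i/2) := by
  obtain ⟨h', rfl⟩ : ∃ h', h = h' + 1 := ⟨h - 1, by omega⟩
  have h2 := fbSize_ge_two (n - (h'+1))
  have hstep : fbSize (n - h') = 2 + 2 * fbSize (n - (h'+1)) := by
    have : n - h' = (n - (h'+1)) + 1 := by omega
    rw [this]; rfl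
  simp only [Lp, F_succ, hi, Nat.add_sub_cancel]
  omega

lemma adj_childL {n h i : ℕ} : F n (h+1) (2*i) = F n h i + 1 := by
  rw [F_succ]
  have e1 : (2*i)/2 = i := by omega
  have e2 : (2*i) % 2 = 0 := by omega
  rw [e1, e2]; omega

lemma adj_childR {n h i : ℕ} : F n (h+1) (2*i+1) = F n h i + 1 + fbSize (n - (h+1)) := by
  rw [F_succ]
  have e1 : (2*i+1)/2 = i := by omega
  have e2 : (2*i+1) % 2 = 1 := by omega
  rw [e1, e2]; omega

lemma leaf_L {n i : ℕ} : Lp n n i = F n n i + 1 := by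
  rw [Lp, Nat.sub_self]
  show F n n i + 2 - 1 = _
  omega

lemma L_sub {n h i : ℕ} (hh : h < n) :
    Lp n (h+1) (2*i+1) = Lp n h i - 1 ∧ Lp n h i = F n (h+1) (2*i+1) + fbSize (n-(h+1)) := by
  have hstep : fbSize (n - h) = 2 + 2 * fbSize (n - (h+1)) := by
    have : n - h = (n - (h+1)) + 1 := by omega
    rw [this]; rfl
  have h2 := fbSize_ge_two (n - (h+1))
  constructor
  · rw [Lp, Lp, adj_childR, hstep]; omega
  · rw [Lp, adj_childR, hstep]; omega

end FBD
namespace FBD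
open Base

/-! ### Canonical arcs -/

lemma arcs_range : ∀ d off, ∀ a ∈ fbArcsAux d off,
    off ≤ a.1 ∧ a.1 < a.2 ∧ a.2 + 1 ≤ off + fbSize d := by
  intro d
  induction d with
  | zero =>
      intro off a ha
      simp only [fbArcsAux, List.mem_singleton] at ha
      subst ha
      show off ≤ off ∧ off < off + 1 ∧ off + 1 + 1 ≤ off + fbSize 0
      refine ⟨le_refl _, by omega, ?_⟩
      show _ ≤ off + 2
      omega
  | succ d ih =>
      intro off a ha
      have hs : fbSize (d+1) = 2 + 2 * fbSize d := rfl
      have h2 := fbSize_ge_two d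
      simp only [fbArcsAux, List.mem_cons, List.mem_append] at ha
      rcases ha with rfl | ha | ha
      · simp only []
        omega
      · obtain ⟨h1, h2', h3⟩ := ih (off+1) a ha
        omega
      · obtain ⟨h1, h2', h3⟩ := ih (off+1+fbSize d) a ha
        omega

/-- Symmetric compatibility of two arcs: distinct endpoints, no crossing either way. -/
def Good (a b : ℕ × ℕ) : Prop :=
  (a.1 ≠ b.1 ∧ a.1 ≠ b.2 ∧ a.2 ≠ b.1 ∧ a.2 ≠ b.2) ∧
  ¬(a.1 < b.1 ∧ b.1 < a.2 ∧ a.2 < b.2) ∧ ¬(b.1 < a.1 ∧ a.1 < b.2 ∧ b.2 < a.2)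

lemma Good_symm : Symmetric Good := by
  intro a b ⟨⟨h1,h2,h3,h4⟩, h5, h6⟩
  exact ⟨⟨h1.symm, h3.symm, h2.symm, h4.symm⟩, h6, h5⟩

lemma arcs_pairwise : ∀ d off, (fbArcsAux d off).Pairwise Good := by
  intro d
  induction d with
  | zero => intro off; simp [fbArcsAux]
  | succ d ih =>
      intro off
      have hs : fbSize (d+1) = 2 + 2 * fbSize d := rfl
      have h2 := fbSize_ge_two d
      show List.Pairwise Good ((off, off + fbSize (d+1) - 1) ::
        (fbArcsAux d (off+1) ++ fbArcsAux d (off+1+fbSize d)))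
      rw [List.pairwise_cons, List.pairwise_append]
      refine ⟨?_, ih (off+1), ih (off+1+fbSize d), ?_⟩
      · intro b hb
        rcases List.mem_append.mp hb with hb | hb
        · obtain ⟨g1, g2, g3⟩ := arcs_range d (off+1) b hb
          exact ⟨⟨by omega, by omega, by omega, by omega⟩, by omega, by omega⟩
        · obtain ⟨g1, g2, g3⟩ := arcs_range d (off+1+fbSize d) b hb
          exact ⟨⟨by omega, by omega, by omega, by omega⟩, by omega, by omega⟩
      · intro a ha b hb
        obtain ⟨g1, g2, g3⟩ := arcs_range d (off+1) a ha
        obtain ⟨g4, g5, g6⟩ := arcs_range d (off+1+fbSize d) b hb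
        exact ⟨⟨by omega, by omega, by omega, by omega⟩, by omega, by omega⟩

lemma arcs_nodup (d off : ℕ) : (fbArcsAux d off).Nodup :=
  (arcs_pairwise d off).imp (fun h => by
    intro he; subst he; exact (h.1.1 rfl))

lemma arcs_length : ∀ d off, (fbArcsAux d off).length = 2^(d+1) - 1 := by
  intro d
  induction d with
  | zero => intro off; rfl
  | succ d ih =>
      intro off
      have h1 : 1 ≤ 2^(d+1) := Nat.one_le_two_pow
      have h3 : 2^(d+1+1) = 2^(d+1) * 2 := pow_succ 2 (d+1)
      simp only [fbArcsAux, List.length_cons, List.length_append, ih]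
      omega

/-- Every canonical arc is a `(first dot, second dot)` pair of a vertex. -/
lemma arcs_are_dots (n : ℕ) : ∀ d h i, n - h = d → h ≤ n → i < 2^h →
    ∀ a ∈ fbArcsAux (n-h) (F n h i),
      ∃ h' i', h ≤ h' ∧ h' ≤ n ∧ i' < 2^h' ∧ a = (F n h' i', Lp n h' i') := by
  intro d
  induction d with
  | zero =>
      intro h i hd hh hi a ha
      have hn : h = n := by omega
      subst hn
      rw [Nat.sub_self] at ha
      simp only [fbArcsAux, List.mem_singleton] at ha
      exact ⟨h, i, le_refl _, hh, hi, by rw [ha, leaf_L]⟩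
  | succ d ih =>
      intro h i hd hh hi a ha
      have hd1 : n - (h+1) = d := by omega
      have hh1 : h + 1 ≤ n := by omega
      have hrw : n - h = d + 1 := hd
      rw [hrw] at ha
      simp only [fbArcsAux, List.mem_cons, List.mem_append] at ha
      rcases ha with rfl | ha | ha
      · refine ⟨h, i, le_refl _, hh, hi, ?_⟩
        show (F n h i, F n h i + fbSize (d+1) - 1) = (F n h i, Lp n h i)
        rw [Lp, ← hrw]
      · rw [← adj_childL (n := n) (h := h) (i := i)] at ha
        rw [← hd1] at ha
        obtain ⟨h', i', hx1, hx2, hx3, hx4⟩ := ih (h+1) (2*i) hd1 hh1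
          (by rw [pow_succ]; omega) a ha
        exact ⟨h', i', by omega, hx2, hx3, hx4⟩
      · have hstep : F n h i + 1 + fbSize d = F n (h+1) (2*i+1) := by
          rw [adj_childR, hd1]
        rw [hstep, ← hd1] at ha
        obtain ⟨h', i', hx1, hx2, hx3, hx4⟩ := ih (h+1) (2*i+1) hd1 hh1
          (by rw [pow_succ]; omega) a ha
        exact ⟨h', i', by omega, hx2, hx3, hx4⟩

/-! ### `fbStruct` is an arc set -/

lemma fbStruct_isArcSet (n : ℕ) : IsArcSet (fbSize n) (fbSeq n) (fbStruct n) := by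
  have hmem : ∀ a ∈ fbStruct n, a ∈ fbArcsAux n 1 := by
    intro a ha; rwa [fbStruct, List.mem_toFinset] at ha
  have hrange : ∀ a ∈ fbStruct n, 1 ≤ a.1 ∧ a.1 < a.2 ∧ a.2 ≤ fbSize n := by
    intro a ha
    obtain ⟨g1, g2, g3⟩ := arcs_range n 1 a (hmem a ha)
    omega
  have hpw := (haveI : Std.Symm Good := ⟨fun a b h => Good_symm h⟩; (arcs_pairwise n 1).forall)
  refine ⟨⟨hrange, ?_, ?_⟩, ?_⟩
  · intro a ha b hb hab
    exact ((hpw (hmem a ha) (hmem b hb) hab).1)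
  · intro a ha b hb
    by_cases hab : a = b
    · subst hab; intro ⟨x, _, _⟩; exact absurd x (lt_irrefl _)
    · exact ((hpw (hmem a ha) (hmem b hb) hab).2.1)
  · intro a ha
    have h1 : F n 0 0 = 1 := rfl
    obtain ⟨h', i', _, hx2, hx3, hx4⟩ := arcs_are_dots n n 0 0 (by omega) (by omega)
      (by norm_num) a (by rw [Nat.sub_zero, h1]; exact hmem a ha)
    rw [hx4]
    simp only []
    rw [letter_F hx2 hx3, letter_L hx2 hx3]
    exact wc_pairFst_pairSnd h' i'

lemma fbStruct_card (n : ℕ) : (fbStruct n).card = 2^(n+1) - 1 := by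
  rw [fbStruct, List.toFinset_card_of_nodup (arcs_nodup n 1), arcs_length]

/-! ### Upper bound on arc sets -/

lemma endpoint_card {m : ℕ} {S : ℕ → Base} {R : Finset (ℕ × ℕ)}
    (h : IsArcSet m S R) :
    (R.biUnion (fun a => ({a.1, a.2} : Finset ℕ))).card = 2 * R.card ∧
      R.biUnion (fun a => ({a.1, a.2} : Finset ℕ)) ⊆ Finset.Icc 1 m := by
  obtain ⟨⟨hb, hd, _⟩, _⟩ := h
  have hdisj : ∀ a ∈ R, ∀ b ∈ R, a ≠ b →
      Disjoint ({a.1, a.2} : Finset ℕ) {b.1, b.2} := by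
    intro a ha b hb' hab
    obtain ⟨d1, d2, d3, d4⟩ := hd a ha b hb' hab
    simp only [Finset.disjoint_insert_left, Finset.disjoint_insert_right,
      Finset.disjoint_singleton, Finset.mem_insert, Finset.mem_singleton,
      Finset.disjoint_singleton_left]
    push_neg
    refine ⟨⟨?_, ?_⟩, ?_, ?_⟩ <;> omega
  have hcard : (R.biUnion (fun a => ({a.1, a.2} : Finset ℕ))).card = 2 * R.card := by
    rw [Finset.card_biUnion hdisj]
    rw [Finset.sum_congr rfl (fun a ha => ?_), Finset.sum_const, smul_eq_mul, mul_comm]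
    have : a.1 ≠ a.2 := by have := (hb a ha).2.1; omega
    rw [Finset.card_insert_of_notMem (by simpa using this), Finset.card_singleton]
  have hsub : R.biUnion (fun a => ({a.1, a.2} : Finset ℕ)) ⊆ Finset.Icc 1 m := by
    intro x hx
    rw [Finset.mem_biUnion] at hx
    obtain ⟨a, ha, hxa⟩ := hx
    obtain ⟨b1, b2, b3⟩ := hb a ha
    simp only [Finset.mem_insert, Finset.mem_singleton] at hxa
    rw [Finset.mem_Icc]
    rcases hxa with rfl | rfl <;> omega
  exact ⟨hcard, hsub⟩

lemma arcset_card_le {m : ℕ} {S : ℕ → Base} {R : Finset (ℕ × ℕ)}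
    (h : IsArcSet m S R) : 2 * R.card ≤ m := by
  obtain ⟨hcard, hsub⟩ := endpoint_card h
  have := Finset.card_le_card hsub
  rw [hcard, Nat.card_Icc] at this
  omega

lemma arcset_cover {m : ℕ} {S : ℕ → Base} {R : Finset (ℕ × ℕ)}
    (h : IsArcSet m S R) (hc : 2 * R.card = m) :
    ∀ p, 1 ≤ p → p ≤ m → ∃ e ∈ R, e.1 = p ∨ e.2 = p := by
  obtain ⟨hcard, hsub⟩ := endpoint_card h
  have heq : R.biUnion (fun a => ({a.1, a.2} : Finset ℕ)) = Finset.Icc 1 m := by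
    apply Finset.eq_of_subset_of_card_le hsub
    rw [hcard, Nat.card_Icc, hc]
    omega
  intro p hp1 hp2
  have : p ∈ R.biUnion (fun a => ({a.1, a.2} : Finset ℕ)) := by
    rw [heq, Finset.mem_Icc]; omega
  rw [Finset.mem_biUnion] at this
  obtain ⟨e, he, hpe⟩ := this
  simp only [Finset.mem_insert, Finset.mem_singleton] at hpe
  exact ⟨e, he, by omega⟩

end FBD
namespace FBD
open Base

/-! ### Matchings and the key structure lemma -/

/-- `M` internally (perfectly) matches the interval `[a,b]`. -/
def Matched (M : Finset (ℕ × ℕ)) (a b : ℕ) : Prop :=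
  ∀ p, a ≤ p → p ≤ b → ∃ e ∈ M, (e.1 = p ∨ e.2 = p) ∧ a ≤ e.1 ∧ e.2 ≤ b

/-- Arcs of `M` inside `[a,b]` are exactly those of the list `L`. -/
def ArcsEq (M : Finset (ℕ × ℕ)) (a b : ℕ) (L : List (ℕ × ℕ)) : Prop :=
  (∀ e ∈ M, a ≤ e.1 → e.2 ≤ b → e ∈ L) ∧ ∀ e ∈ L, e ∈ M

variable {m : ℕ} {S : ℕ → Base} {M : Finset (ℕ × ℕ)}

lemma share_eq (hM : IsArcSet m S M) {e f : ℕ × ℕ} (he : e ∈ M) (hf : f ∈ M)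
    (h : e.1 = f.1 ∨ e.1 = f.2 ∨ e.2 = f.1 ∨ e.2 = f.2) : e = f := by
  by_contra hne
  obtain ⟨d1, d2, d3, d4⟩ := hM.1.2.1 e he f hf hne
  tauto

lemma min_arc (hM : IsArcSet m S M) {a b : ℕ} (hm : Matched M a b) (hab : a ≤ b) :
    ∃ p, (a, p) ∈ M ∧ a < p ∧ p ≤ b := by
  obtain ⟨e, heM, hep, he1, he2⟩ := hm a le_rfl hab
  have hlt := (hM.1.1 e heM).2.1
  rcases hep with h | h
  · refine ⟨e.2, ?_, by omega, he2⟩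
    have : (a, e.2) = e := by rw [← h]
    rwa [this]
  · omega

lemma no_straddle (hM : IsArcSet m S M) {a p : ℕ} (hap : (a, p) ∈ M) {e : ℕ × ℕ}
    (he : e ∈ M) (h1 : a ≤ e.1) (h2 : e.1 ≤ p) (h3 : p < e.2) : False := by
  by_cases heq : e = (a, p)
  · rw [heq] at h3; simp at h3
  · obtain ⟨d1, d2, d3, d4⟩ := hM.1.2.1 e he (a,p) hap heq
    simp only [] at d1 d2 d3 d4
    have hlt := (hM.1.1 e he).2.1
    have hcr := hM.1.2.2 (a,p) hap e he
    simp only [] at hcr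
    omega

lemma inner_matched (hM : IsArcSet m S M) {a b p : ℕ} (hap : (a, p) ∈ M)
    (hm : Matched M a b) (hp : p ≤ b) (hap2 : a < p) : Matched M (a+1) (p-1) := by
  intro q hq1 hq2
  obtain ⟨e, heM, hep, he1, he2⟩ := hm q (by omega) (by omega)
  have hlt := (hM.1.1 e heM).2.1
  have hne : e ≠ (a, p) := by
    intro heq; rw [heq] at hep; simp at hep; omega
  obtain ⟨d1, d2, d3, d4⟩ := hM.1.2.1 e heM (a,p) hap hne
  simp only [] at d1 d2 d3 d4
  refine ⟨e, heM, hep, by omega, ?_⟩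
  rcases hep with h | h
  · by_contra hgt
    exact no_straddle hM hap heM (by omega) (by omega) (by omega)
  · omega

lemma outer_matched (hM : IsArcSet m S M) {a b p : ℕ} (hap : (a, p) ∈ M)
    (hm : Matched M a b) (hp : p ≤ b) (hap2 : a < p) : Matched M (p+1) b := by
  intro q hq1 hq2
  obtain ⟨e, heM, hep, he1, he2⟩ := hm q (by omega) (by omega)
  have hlt := (hM.1.1 e heM).2.1
  have hne : e ≠ (a, p) := by
    intro heq; rw [heq] at hep; simp at hep; omega
  obtain ⟨d1, d2, d3, d4⟩ := hM.1.2.1 e heM (a,p) hap hne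
  simp only [] at d1 d2 d3 d4
  refine ⟨e, heM, hep, ?_, he2⟩
  rcases hep with h | h
  · omega
  · by_contra hgt
    exact no_straddle hM hap heM (by omega) (by omega) (by omega)

lemma parity_clash {x y : Base} {h1 h2 : ℕ} (hw : WCMatch x y)
    (e1 : isAU x = decide (h1 % 2 = 0)) (e2 : isAU y = decide (h2 % 2 = 0))
    (hne : h1 % 2 ≠ h2 % 2) : False := by
  have h := wc_isAU hw
  rw [e1, e2] at h
  simp only [decide_eq_decide] at h
  omega

lemma compB_compB (x : Base) : compB (compB x) = x := by cases x <;> rfl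

end FBD
namespace FBD
open Base

lemma pair_eq {e : ℕ × ℕ} {x y : ℕ} (h1 : e.1 = x) (h2 : e.2 = y) : e = (x, y) := by
  cases e; simp_all

lemma pow_half {h : ℕ} (hh : 1 ≤ h) : 2^h = 2 * 2^(h-1) := by
  conv_lhs => rw [show h = (h-1)+1 by omega]
  rw [pow_succ]; ring

/-- **Key lemma.** Any internally matched interval is a subtree interval or a
sibling-pair interval, and carries exactly the canonical arcs. -/
theorem key (n : ℕ) (M : Finset (ℕ × ℕ)) (hM : IsArcSet (fbSize n) (fbSeq n) M) :
    ∀ len a b, b + 1 - a ≤ len → 1 ≤ a → a ≤ b → b ≤ fbSize n → Matched M a b →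
    ∃ h i, h ≤ n ∧ i < 2^h ∧ a = F n h i ∧
      ((b = Lp n h i ∧ ArcsEq M a b (fbArcsAux (n-h) (F n h i))) ∨
       (i % 2 = 0 ∧ i + 1 < 2^h ∧ b = Lp n h (i+1) ∧
         ArcsEq M a b (fbArcsAux (n-h) (F n h i) ++ fbArcsAux (n-h) (F n h (i+1))))) := by
  intro len
  induction len with
  | zero => intro a b h1 h2 h3 _ _; omega
  | succ len ih =>
    intro a b hlen ha1 hab hbm hmat
    obtain ⟨p, hap, hap2, hpb⟩ := min_arc hM hmat hab
    have hw : WCMatch (fbSeq n a) (fbSeq n p) := hM.2 (a, p) hap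
    -- Step 1: `[a,p]` is a single subtree interval with canonical arcs.
    have hsingle : ∃ h0 i0, h0 ≤ n ∧ i0 < 2^h0 ∧ a = F n h0 i0 ∧ p = Lp n h0 i0 ∧
        ArcsEq M a p (fbArcsAux (n-h0) (F n h0 i0)) := by
      by_cases hpa : p = a + 1
      · -- empty interior
        obtain ⟨h, i, hh, hi, hcase⟩ := cls_surj ha1 (le_trans hab hbm)
        rcases hcase with ⟨_, haF⟩ | ⟨_, haL⟩
        · -- a is a first dot
          by_cases hhn : h = n
          · have haF' : a = F n n i := by rw [haF, hhn]
            have hlst : fbArcsAux (n-h) (F n h i) = [(a, a+1)] := by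
              rw [hhn, Nat.sub_self, ← haF']
              rfl
            refine ⟨h, i, hh, hi, haF, ?_, ?_, ?_⟩
            · rw [hpa, haF, hhn]
              exact leaf_L.symm
            · intro e heM he1 he2
              have hlt := (hM.1.1 e heM).2.1
              have he : e = (a, p) := pair_eq (by omega) (by omega)
              rw [hlst, he, hpa]
              exact List.mem_singleton.mpr rfl
            · intro e hel
              rw [hlst] at hel
              have he : e = (a, a+1) := List.mem_singleton.mp hel
              rw [he, ← hpa]
              exact hap
          · exfalso
            have hhlt : h < n := by omega
            have hp : p = F n (h+1) (2*i) := by rw [hpa, haF, adj_childL]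
            have l1 : fbSeq n a = pairFst h i := by rw [haF]; exact letter_F hh hi
            have l2 : fbSeq n p = pairFst (h+1) (2*i) := by
              rw [hp]; exact letter_F (by omega) (by rw [pow_succ]; omega)
            rw [l1, l2] at hw
            exact parity_clash hw (isAU_pairFst _ _) (isAU_pairFst _ _) (by omega)
        · -- a is a second dot: impossible
          exfalso
          have hge2 := fbSize_ge_two (n - h)
          obtain ⟨hF1, hF2⟩ := F_bound n h hh i hi
          rcases (by omega : i % 2 = 0 ∨ i % 2 = 1) with hev | hod
          · by_cases hh0 : h = 0
            · subst hh0
              have hi0 : i = 0 := by omega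
              subst hi0
              rw [F_zero] at hF2
              have : a = fbSize n := by rw [haL, Lp, F_zero, Nat.sub_zero]; omega
              omega
            · have hh1 : 1 ≤ h := by omega
              have hp : p = F n h (i+1) := by rw [hpa, haL, adj_sib hev hh1]
              have hi1 : i + 1 < 2^h := by
                have := pow_half hh1; omega
              have l1 : fbSeq n a = pairSnd h i := by rw [haL]; exact letter_L hh hi
              have l2 : fbSeq n p = pairFst h (i+1) := by rw [hp]; exact letter_F hh hi1
              rw [l1, l2, wc_iff, pairFst_succ, pairSnd_eq_compB, compB_compB] at hw
              exact compB_ne _ hw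
          · have hh1 : 1 ≤ h := by
              rcases Nat.eq_zero_or_pos h with rfl | h1
              · simp at hi; omega
              · exact h1
            have hp : p = Lp n (h-1) (i/2) := by rw [hpa, haL, adj_parent hod hh hh1]
            have hi2 : i / 2 < 2^(h-1) := by have := pow_half hh1; omega
            have l1 : fbSeq n a = pairSnd h i := by rw [haL]; exact letter_L hh hi
            have l2 : fbSeq n p = pairSnd (h-1) (i/2) := by
              rw [hp]; exact letter_L (by omega) hi2
            rw [l1, l2] at hw
            exact parity_clash hw (isAU_pairSnd _ _) (isAU_pairSnd _ _) (by omega)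
      · -- nonempty interior
        have hmat2 := inner_matched hM hap hmat hpb hap2
        obtain ⟨h, i, hh, hi, haF1, hcase⟩ :=
          ih (a+1) (p-1) (by omega) (by omega) (by omega) (by omega) hmat2
        have hh1 : 1 ≤ h := by
          by_contra h0
          have hz : h = 0 := by omega
          subst hz
          rw [F_zero] at haF1
          omega
        obtain ⟨h', rfl⟩ : ∃ h', h = h' + 1 := ⟨h - 1, by omega⟩
        have hge2 := fbSize_ge_two (n - (h'+1))
        obtain ⟨hF1, hF2⟩ := F_bound n (h'+1) hh i hi
        rcases hcase with ⟨hbL, hAE⟩ | ⟨hie, hi1, hbL, hAE⟩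
        · -- single interior: always a contradiction
          exfalso
          have hp : p = Lp n (h'+1) i + 1 := by
            have : 1 ≤ Lp n (h'+1) i := by rw [Lp]; omega
            omega
          rcases (by omega : i % 2 = 0 ∨ i % 2 = 1) with hev | hod
          · -- i even: a first dot of parent, p first dot of next sibling
            have haF : a = F n h' (i/2) := by
              rw [F_succ, hev] at haF1; omega
            have hi1 : i + 1 < 2^(h'+1) := by
              have : 2^(h'+1) = 2 * 2^h' := by rw [pow_succ]; ring
              omega
            have hp2 : p = F n (h'+1) (i+1) := by rw [hp, adj_sib hev (by omega)]
            have hi2 : i / 2 < 2^h' := by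
              have : 2^(h'+1) = 2 * 2^h' := by rw [pow_succ]; ring
              omega
            have l1 : fbSeq n a = pairFst h' (i/2) := by
              rw [haF]; exact letter_F (by omega) hi2
            have l2 : fbSeq n p = pairFst (h'+1) (i+1) := by
              rw [hp2]; exact letter_F hh hi1
            rw [l1, l2] at hw
            exact parity_clash hw (isAU_pairFst _ _) (isAU_pairFst _ _) (by omega)
          · -- i odd: a second dot of previous sibling, p second dot of parent
            have hie1 : (i-1) % 2 = 0 := by omega
            have hie2 : i - 1 < 2^(h'+1) := by omega
            have haL : a = Lp n (h'+1) (i-1) := by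
              have := adj_sib hie1 (by omega : 1 ≤ h'+1) (n := n)
              rw [show i - 1 + 1 = i by omega] at this
              omega
            have hp2 : p = Lp n h' (i/2) := by
              rw [hp, adj_parent hod hh (by omega)]; rfl
            have hi2 : i / 2 < 2^h' := by
              have : 2^(h'+1) = 2 * 2^h' := by rw [pow_succ]; ring
              omega
            have l1 : fbSeq n a = pairSnd (h'+1) (i-1) := by
              rw [haL]; exact letter_L hh hie2
            have l2 : fbSeq n p = pairSnd h' (i/2) := by
              rw [hp2]; exact letter_L (by omega) hi2
            rw [l1, l2] at hw
            exact parity_clash hw (isAU_pairSnd _ _) (isAU_pairSnd _ _) (by omega)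
        · -- double interior: canonical internal arc
          have hi2 : i / 2 < 2^h' := by
            have : 2^(h'+1) = 2 * 2^h' := by rw [pow_succ]; ring
            omega
          have haF : a = F n h' (i/2) := by
            rw [F_succ, hie] at haF1; omega
          have hd : n - h' = (n - (h'+1)) + 1 := by omega
          have hadjL : F n (h'+1) i = F n h' (i/2) + 1 := by
            rw [F_succ, hie]; omega
          have hadjR : F n (h'+1) (i+1) = F n h' (i/2) + 1 + fbSize (n-(h'+1)) := by
            rw [F_succ, show (i+1) % 2 = 1 by omega, show (i+1)/2 = i/2 by omega]
            omega
          have hpL : p = Lp n h' (i/2) := by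
            have h1 : p = Lp n (h'+1) (i+1) + 1 := by
              have : 1 ≤ Lp n (h'+1) (i+1) := by
                rw [Lp, hadjR]; omega
              omega
            rw [h1, adj_parent (by omega : (i+1) % 2 = 1) hh (by omega),
              show (i+1)/2 = i/2 by omega]
            rfl
          have hadjR2 : F n (h'+1) i + fbSize (n-(h'+1)) = F n (h'+1) (i+1) := by
            omega
          have hcomp : a + fbSize ((n-(h'+1))+1) - 1 = p := by
            rw [hpL, Lp, ← haF, hd]
          have hlist : fbArcsAux (n-h') (F n h' (i/2))
              = (a, p) :: (fbArcsAux (n-(h'+1)) (F n (h'+1) i)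
                  ++ fbArcsAux (n-(h'+1)) (F n (h'+1) (i+1))) := by
            rw [hd]
            show (F n h' (i/2), F n h' (i/2) + fbSize ((n-(h'+1))+1) - 1)
                :: (fbArcsAux (n-(h'+1)) (F n h' (i/2) + 1)
                  ++ fbArcsAux (n-(h'+1)) (F n h' (i/2) + 1 + fbSize (n-(h'+1)))) = _
            rw [← hadjL, hadjR2, ← haF, hcomp]
          refine ⟨h', i/2, by omega, hi2, haF, hpL, ?_, ?_⟩
          · intro e heM he1 he2
            rw [hlist]
            by_cases heq : e = (a, p)
            · rw [heq]; exact List.mem_cons_self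
            · have hlt := (hM.1.1 e heM).2.1
              obtain ⟨d1, d2, d3, d4⟩ := hM.1.2.1 e heM (a, p) hap heq
              simp only [] at d1 d2 d3 d4
              have hm1 : a + 1 ≤ e.1 := by omega
              have hm2 : e.2 ≤ p - 1 := by omega
              exact List.mem_cons_of_mem _ (hAE.1 e heM hm1 hm2)
          · intro e hel
            rw [hlist] at hel
            rcases List.mem_cons.mp hel with rfl | hel
            · exact hap
            · exact hAE.2 e hel
    -- Step 2: extend by the tail `[p+1, b]`.
    obtain ⟨h0, i0, hh0, hi0, haF, hpL, hAE⟩ := hsingle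
    have hAEl : ∀ e ∈ M, a ≤ e.1 → e.2 ≤ b → e.2 ≤ p ∨ p + 1 ≤ e.1 := by
      intro e heM he1 he2
      by_cases hc : e.1 ≤ p
      · left
        by_contra hgt
        exact no_straddle hM hap heM he1 hc (by omega)
      · right; omega
    by_cases hpb2 : p = b
    · subst hpb2
      exact ⟨h0, i0, hh0, hi0, haF, Or.inl ⟨hpL, hAE⟩⟩
    · -- nonempty tail
      have hmat3 := outer_matched hM hap hmat hpb hap2
      obtain ⟨h1', i1, hh1', hi1', hp1F, hcase1⟩ :=
        ih (p+1) b (by omega) (by omega) (by omega) hbm hmat3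
      -- p+1 is a first dot; p = Lp n h0 i0, so i0 must be even and (h1',i1)=(h0,i0+1)
      have hge0 := fbSize_ge_two (n - h0)
      obtain ⟨hG1, hG2⟩ := F_bound n h0 hh0 i0 hi0
      have hi0ev : i0 % 2 = 0 := by
        rcases (by omega : i0 % 2 = 0 ∨ i0 % 2 = 1) with hev | hod
        · exact hev
        · exfalso
          have hh01 : 1 ≤ h0 := by
            rcases Nat.eq_zero_or_pos h0 with rfl | hx
            · simp at hi0; omega
            · exact hx
          have : p + 1 = Lp n (h0-1) (i0/2) := by rw [hpL, adj_parent hod hh0 hh01]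
          have hcl1 : cls n (p+1) = (false, h0-1, i0/2) := by
            rw [this]; exact cls_L (by omega) (by have := pow_half hh01; omega)
          have hcl2 : cls n (p+1) = (true, h1', i1) := by
            rw [hp1F]; exact cls_F hh1' hi1'
          rw [hcl1] at hcl2
          simp at hcl2
      have hh01 : 1 ≤ h0 := by
        by_contra hx
        have hz : h0 = 0 := by omega
        subst hz
        have hz2 : i0 = 0 := by omega
        subst hz2
        rw [Lp, F_zero, Nat.sub_zero] at hpL
        omega
      have hi01 : i0 + 1 < 2^h0 := by have := pow_half hh01; omega
      have hpF : p + 1 = F n h0 (i0+1) := by rw [hpL, adj_sib hi0ev hh01]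
      have hids : h1' = h0 ∧ i1 = i0 + 1 := by
        have hcl1 : cls n (p+1) = (true, h0, i0+1) := by
          rw [hpF]; exact cls_F hh0 hi01
        have hcl2 : cls n (p+1) = (true, h1', i1) := by
          rw [hp1F]; exact cls_F hh1' hi1'
        rw [hcl1] at hcl2
        simp at hcl2
        exact ⟨hcl2.1.symm, hcl2.2.symm⟩
      rw [hids.1, hids.2] at hcase1 hp1F
      rcases hcase1 with ⟨hbL1, hAE1⟩ | ⟨hie1, _, _, _⟩
      · -- tail is the sibling subtree: double conclusion
        refine ⟨h0, i0, hh0, hi0, haF, Or.inr ⟨hi0ev, hi01, hbL1, ?_, ?_⟩⟩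
        · intro e heM he1 he2
          rcases hAEl e heM he1 he2 with hc | hc
          · exact List.mem_append_left _ (hAE.1 e heM he1 hc)
          · exact List.mem_append_right _ (hAE1.1 e heM (by omega) he2)
        · intro e hel
          rcases List.mem_append.mp hel with hel | hel
          · exact hAE.2 e hel
          · exact hAE1.2 e hel
      · -- tail cannot be a double run (it would start at an odd index)
        exfalso
        omega
end FBD
namespace FBD
open Base

lemma max_struct (n : ℕ) : IsMaxArcSet (fbLen n) (fbSeq n) (fbStruct n) := by
  have hS : IsArcSet (fbLen n) (fbSeq n) (fbStruct n) := by
    rw [fbLen_eq]; exact fbStruct_isArcSet n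
  refine ⟨hS, fun R' hR' => ?_⟩
  have h1 := arcset_card_le hR'
  rw [fbLen_eq, fbSize_pow] at h1
  rw [fbStruct_card]
  have h2 : 2^(n+2) = 2 * 2^(n+1) := by rw [pow_succ]; ring
  have h3 : 2 ≤ 2^(n+1) := Nat.one_lt_two_pow_iff.mpr (by omega)
  omega

lemma uniq_struct (n : ℕ) (R' : Finset (ℕ × ℕ))
    (hR' : IsMaxArcSet (fbLen n) (fbSeq n) R') : R' = fbStruct n := by
  have hS : IsArcSet (fbLen n) (fbSeq n) (fbStruct n) := by
    rw [fbLen_eq]; exact fbStruct_isArcSet n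
  have hup := arcset_card_le hR'.1
  have hlow := hR'.2 (fbStruct n) hS
  rw [fbStruct_card] at hlow
  rw [fbLen_eq, fbSize_pow] at hup
  have h2 : 2^(n+2) = 2 * 2^(n+1) := by rw [pow_succ]; ring
  have h3 : 2 ≤ 2^(n+1) := Nat.one_lt_two_pow_iff.mpr (by omega)
  have hcard : 2 * R'.card = fbLen n := by rw [fbLen_eq, fbSize_pow]; omega
  have hA : IsArcSet (fbSize n) (fbSeq n) R' := by rw [← fbLen_eq]; exact hR'.1
  have hm2 := fbSize_ge_two n
  have hmat : Matched R' 1 (fbSize n) := by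
    intro p hp1 hp2
    obtain ⟨e, he, hpe⟩ := arcset_cover hR'.1 hcard p hp1 (by rwa [fbLen_eq])
    obtain ⟨b1, b2, b3⟩ := hA.1.1 e he
    exact ⟨e, he, hpe, by omega, by omega⟩
  obtain ⟨h, i, hh, hi, h1F, hcase⟩ :=
    key n R' hA (fbSize n + 1) 1 (fbSize n) (by omega) le_rfl (by omega) le_rfl hmat
  have hz : h = 0 ∧ i = 0 := by
    have hc1 : cls n 1 = (true, h, i) := by rw [h1F]; exact cls_F hh hi
    have hc2 : cls n 1 = (true, 0, 0) := by
      have : (1:ℕ) = F n 0 0 := rfl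
      rw [this]; exact cls_F (by omega) (by norm_num)
    rw [hc2] at hc1
    injection hc1 with _ h2
    injection h2 with ha hb
    exact ⟨ha.symm, hb.symm⟩
  obtain ⟨rfl, rfl⟩ : h = 0 ∧ i = 0 := hz
  rcases hcase with ⟨_, hAE⟩ | ⟨_, hcon, _, _⟩
  · have hl : fbArcsAux (n-0) (F n 0 0) = fbArcsAux n 1 := by rw [Nat.sub_zero]; rfl
    rw [hl] at hAE
    ext e
    constructor
    · intro he
      obtain ⟨b1, b2, b3⟩ := hA.1.1 e he
      rw [fbStruct, List.mem_toFinset]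
      exact hAE.1 e he b1 b3
    · intro he
      rw [fbStruct, List.mem_toFinset] at he
      exact hAE.2 e he
  · norm_num at hcon

end FBD

/-- For every `n ≥ 0`, the natural labelling `Ŝ(n)` of the saturated
full binary tree of height `n` is a design, and its unique maximum-size arc set equals
the corresponding secondary structure `R̂(n)`. -/
theorem full_binary_is_design (n : ℕ) :
    IsDesign (fbLen n) (fbSeq n) ∧
    IsMaxArcSet (fbLen n) (fbSeq n) (fbStruct n) ∧
    ∀ R' : Finset (ℕ × ℕ), IsMaxArcSet (fbLen n) (fbSeq n) R' → R' = fbStruct n := by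
  refine ⟨⟨fbStruct n, FBD.max_struct n, fun R' h => FBD.uniq_struct n R' h⟩,
    FBD.max_struct n, fun R' h => FBD.uniq_struct n R' h⟩
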